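/- For every permutation w of {1,…,N} with permutation matrix P_w ∈ GL_N(ℂ) (P_w e_b = e_{w(b)}), and every a ∈ {1,…,N}: (P_w)^{⊗n} · L_a(z_1,…,z_n; λ_{w(1)},…,λ_{w(N)}) · ((P_w)^{⊗n})^{−1} = L_{w(a)}(z_1,…,z_n; λ_1,…,λ_N) as operators on W = (ℂ^N)^{⊗n}. (This realizes the Weyl group equivariance w·D_a = D_{w(a)} of the dynamical operators on tensor products of vector representations.) -/
import Mathlib


noncomputable section

/-- Basis of `W = (ℂ^N)^{⊗n}`: multi-indices `Fin n → Fin N`. -/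
abbrev BIdx (N n : ℕ) := Fin n → Fin N

/-- `End(W)` realized as matrices in the standard tensor basis of `W = (ℂ^N)^{⊗n}`. -/
abbrev EndW (N n : ℕ) := Matrix (BIdx N n) (BIdx N n) ℂ

/-- `E_{a,b}^{(i)}`: the matrix unit `E_{a,b}` of `gl_N` acting in the `i`-th tensor
factor of `W` (it sends the basis vector `e_{m}` to `e_{m[i ↦ a]}` if `m i = b`). -/
def Ei {N n : ℕ} (i : Fin n) (a b : Fin N) : EndW N n :=
  Matrix.of fun k m => if k = Function.update m i a ∧ m i = b then 1 else 0

/-- `E_{a,b} = Σ_i E_{a,b}^{(i)}`. -/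
def Etot {N n : ℕ} (a b : Fin N) : EndW N n := ∑ i, Ei i a b

/-- The flip `P` acting in the `i`-th and `j`-th tensor factors of `W`. -/
def Pflip {N n : ℕ} (i j : Fin n) : EndW N n :=
  Matrix.of fun k m => if k = m ∘ Equiv.swap i j then 1 else 0

/-- The rational R-matrix `R(x) = (x·Id + P)/(x+1)` acting in factors `i,j` of `W`. -/
def Rm {N n : ℕ} (x : ℂ) (i j : Fin n) : EndW N n :=
  (x + 1)⁻¹ • (x • (1 : EndW N n) + Pflip i j)

/-- `Λ^{(m)}(λ) = diag(λ_1,…,λ_N)` acting in the `m`-th tensor factor of `W`. -/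
def LamD {N n : ℕ} (lam : Fin N → ℂ) (m : Fin n) : EndW N n :=
  Matrix.diagonal fun k => lam (k m)

/-- The dynamical operator coefficient `L_a(z;λ)` on `W`. -/
def Ldyn {N n : ℕ} (z : Fin n → ℂ) (lam : Fin N → ℂ) (a : Fin N) : EndW N n :=
  (2⁻¹ : ℂ) • (Etot a a) ^ 2
  - ∑ i, z i • Ei i a a
  - ∑ b : Fin N, ∑ i : Fin n, ∑ j : Fin n, (if i < j then Ei i a b * Ei j b a else 0)
  - ∑ b ∈ Finset.univ.erase a,
      (lam b / (lam a - lam b)) • (Etot a b * Etot b a - Etot a a)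


/-- `(P_w)^{⊗n}`: the permutation matrix of `w` (`P_w e_b = e_{w(b)}`) acting in every
tensor factor of `W`. -/
def PwT {N n : ℕ} (w : Equiv.Perm (Fin N)) : EndW N n :=
  Matrix.of fun k m => if k = w ∘ m then 1 else 0

lemma PwT_mul_apply {N n : ℕ} (w : Equiv.Perm (Fin N)) (X : EndW N n) (k m : BIdx N n) :
    ((PwT w * X : EndW N n) k m) = X (⇑w⁻¹ ∘ k) m := by
  have : ∀ l : BIdx N n, k = ⇑w ∘ l ↔ l = ⇑w⁻¹ ∘ k := by
    intro l
    constructor <;> (rintro rfl; funext x; simp)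
  simp only [PwT, Matrix.mul_apply, Matrix.of_apply, this, ite_mul, one_mul, zero_mul]
  rw [Finset.sum_ite_eq' Finset.univ (⇑w⁻¹ ∘ k)]
  simp

lemma mul_PwT_apply {N n : ℕ} (w : Equiv.Perm (Fin N)) (X : EndW N n) (k m : BIdx N n) :
    ((X * PwT w : EndW N n) k m) = X k (⇑w ∘ m) := by
  simp only [PwT, Matrix.mul_apply, Matrix.of_apply, mul_ite, mul_one, mul_zero]
  rw [Finset.sum_ite_eq' Finset.univ (⇑w ∘ m)]
  simp

lemma PwT_mul {N n : ℕ} (w v : Equiv.Perm (Fin N)) :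
    (PwT w : EndW N n) * PwT v = PwT (w * v) := by
  ext k m
  rw [PwT_mul_apply]
  simp only [PwT, Matrix.of_apply]
  refine if_congr ?_ rfl rfl
  constructor
  · intro h; funext x
    have := congrFun h x
    simp only [Function.comp_apply] at this
    show k x = w (v (m x))
    rw [← this]; simp
  · rintro rfl; funext x; simp

lemma PwT_one {N n : ℕ} : (PwT 1 : EndW N n) = 1 := by
  ext k m
  simp [PwT, Matrix.one_apply]

lemma PwT_Ei {N n : ℕ} (w : Equiv.Perm (Fin N)) (i : Fin n) (a b : Fin N) :
    PwT w * Ei i a b = Ei i (w a) (w b) * PwT w := by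
  ext k m
  rw [PwT_mul_apply, mul_PwT_apply]
  simp only [Ei, Matrix.of_apply]
  refine if_congr ?_ rfl rfl
  rw [funext_iff, funext_iff]
  constructor
  · rintro ⟨h1, h2⟩
    refine ⟨fun x => ?_, by rw [Function.comp_apply, h2]⟩
    have := h1 x
    simp only [Function.comp_apply] at this ⊢
    rw [Function.update_apply] at this ⊢
    split_ifs at this ⊢ with hx
    · rw [← this]; simp
    · show k x = w (m x)
      rw [← this]; simp
  · rintro ⟨h1, h2⟩
    simp only [Function.comp_apply] at h2
    refine ⟨fun x => ?_, w.injective h2⟩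
    have := h1 x
    simp only [Function.comp_apply] at this ⊢
    rw [Function.update_apply] at this ⊢
    split_ifs at this ⊢ with hx
    · rw [this]; simp
    · show w⁻¹ (k x) = m x
      rw [this]; simp

lemma PwT_Etot {N n : ℕ} (w : Equiv.Perm (Fin N)) (a b : Fin N) :
    PwT w * Etot a b = Etot (w a) (w b) * (PwT (n := n) w) := by
  simp [Etot, Finset.mul_sum, Finset.sum_mul, PwT_Ei]

lemma PwT_Ldyn {N n : ℕ} (z : Fin n → ℂ) (lam : Fin N → ℂ)
    (w : Equiv.Perm (Fin N)) (a : Fin N) :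
    PwT w * Ldyn z (fun b => lam (w b)) a = Ldyn z lam (w a) * PwT w := by
  rw [Ldyn, Ldyn]
  simp only [mul_sub, sub_mul]
  congr 1
  congr 1
  congr 1
  · rw [mul_smul_comm, smul_mul_assoc]
    congr 1
    rw [sq, sq, ← mul_assoc, PwT_Etot, mul_assoc, PwT_Etot, ← mul_assoc]
  · rw [Finset.mul_sum, Finset.sum_mul]
    refine Finset.sum_congr rfl fun i _ => ?_
    rw [mul_smul_comm, smul_mul_assoc, PwT_Ei]
  · rw [Finset.mul_sum, Finset.sum_mul,
      ← Equiv.sum_comp w (fun b => (∑ i : Fin n, ∑ j : Fin n,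
        if i < j then Ei i (w a) b * Ei j b (w a) else 0) * PwT w)]
    refine Finset.sum_congr rfl fun b _ => ?_
    rw [Finset.mul_sum, Finset.sum_mul]
    refine Finset.sum_congr rfl fun i _ => ?_
    rw [Finset.mul_sum, Finset.sum_mul]
    refine Finset.sum_congr rfl fun j _ => ?_
    split_ifs with hij
    · rw [← mul_assoc, PwT_Ei, mul_assoc, PwT_Ei, ← mul_assoc]
    · rw [mul_zero, zero_mul]
  · rw [Finset.mul_sum, Finset.sum_mul]
    refine Finset.sum_equiv w (fun b => ?_) (fun b _ => ?_)
    · simp [w.injective.eq_iff]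
    · rw [mul_smul_comm, smul_mul_assoc]
      congr 1
      rw [mul_sub, sub_mul, ← mul_assoc, PwT_Etot, mul_assoc, PwT_Etot, ← mul_assoc,
        PwT_Etot]

/-- Weyl group equivariance of the dynamical operators on `W = (ℂ^N)^{⊗n}`:
`(P_w)^{⊗n} · L_a(z; λ_{w(1)},…,λ_{w(N)}) · ((P_w)^{⊗n})⁻¹ = L_{w(a)}(z; λ)`. -/
theorem weyl_equivariance_vector_rep {N n : ℕ}
    (z : Fin n → ℂ) (lam : Fin N → ℂ)
    (hlam0 : ∀ a, lam a ≠ 0) (hlam : Function.Injective lam)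
    (w : Equiv.Perm (Fin N)) (a : Fin N) :
    PwT w * Ldyn z (fun b => lam (w b)) a * (PwT (n := n) w)⁻¹ = Ldyn z lam (w a) := by
  have h1 : PwT w * PwT w⁻¹ = (1 : EndW N n) := by
    rw [PwT_mul, mul_inv_cancel, PwT_one]
  have hinv : (PwT (n := n) w)⁻¹ = PwT w⁻¹ := Matrix.inv_eq_right_inv h1
  rw [hinv, PwT_Ldyn, mul_assoc, h1, mul_one]
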